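/- arXiv:1203.2507 — 3 statements merged into one kernel-verified Lean document; each statement's English description precedes it below -/
import Mathlib

section
/- Let v_1, …, v_M be vectors in a real inner product space, and for weight vectors λ, μ in the simplex (nonnegative entries summing to 1) define v_λ = Σ_j λ_j v_j and V(λ) = Σ_j λ_j ‖v_j − v_λ‖². Then for any θ ∈ [0,1], with λ_θ = (1−θ)μ + θλ, one has V(λ_θ) = θ V(λ) + (1−θ) V(μ) + θ(1−θ) ‖v_μ − v_λ‖². -/
open Finset

lemma var_key {E : Type*} [NormedAddCommGroup E] [InnerProductSpace ℝ E] {M : ℕ}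
    (v : Fin M → E) (w : Fin M → ℝ) (hw : ∑ j, w j = 1) :
    (∑ j, w j * ‖v j - ∑ k, w k • v k‖ ^ 2) =
      (∑ j, w j * ‖v j‖ ^ 2) - ‖∑ k, w k • v k‖ ^ 2 := by
  set c : E := ∑ k, w k • v k with hc
  have hexp : ∀ j, ‖v j - c‖ ^ 2 = ‖v j‖ ^ 2 - 2 * inner ℝ (v j) c + ‖c‖ ^ 2 := by
    intro j; rw [@norm_sub_sq_real]
  have hinner : ∑ j, w j * inner ℝ (v j) c = (‖c‖ : ℝ) ^ 2 := by
    have : ∑ j, w j * inner ℝ (v j) c = inner ℝ c c := by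
      rw [hc, sum_inner]
      exact Finset.sum_congr rfl fun j _ => by rw [inner_smul_left]; simp
    rw [this, real_inner_self_eq_norm_sq]
  calc (∑ j, w j * ‖v j - c‖ ^ 2)
      = ∑ j, (w j * ‖v j‖ ^ 2 - 2 * (w j * inner ℝ (v j) c) + w j * ‖c‖ ^ 2) := by
        refine Finset.sum_congr rfl fun j _ => ?_
        rw [hexp j]; ring
    _ = (∑ j, w j * ‖v j‖ ^ 2) - 2 * (∑ j, w j * inner ℝ (v j) c)
          + (∑ j, w j) * ‖c‖ ^ 2 := by
        rw [Finset.sum_add_distrib, Finset.sum_sub_distrib, ← Finset.mul_sum,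
          Finset.sum_mul]
    _ = (∑ j, w j * ‖v j‖ ^ 2) - ‖c‖ ^ 2 := by
        rw [hinner, hw]; ring

/-- Interpolation identity for the variance functional `V` on the simplex:
`V(λ_θ) = θ V(λ) + (1−θ) V(μ) + θ(1−θ) ‖v_μ − v_λ‖²` with `λ_θ = (1−θ)μ + θλ`. -/
theorem stmt_3 {E : Type*} [NormedAddCommGroup E] [InnerProductSpace ℝ E] {M : ℕ}
    (v : Fin M → E) (lam mu : Fin M → ℝ)
    (hl : ∀ j, 0 ≤ lam j) (hls : ∑ j, lam j = 1)
    (hm : ∀ j, 0 ≤ mu j) (hms : ∑ j, mu j = 1)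
    (θ : ℝ) (hθ : θ ∈ Set.Icc (0 : ℝ) 1) :
    (∑ j, ((1 - θ) * mu j + θ * lam j) *
        ‖v j - ∑ k, ((1 - θ) * mu k + θ * lam k) • v k‖ ^ 2) =
      θ * (∑ j, lam j * ‖v j - ∑ k, lam k • v k‖ ^ 2)
        + (1 - θ) * (∑ j, mu j * ‖v j - ∑ k, mu k • v k‖ ^ 2)
        + θ * (1 - θ) * ‖(∑ k, mu k • v k) - ∑ k, lam k • v k‖ ^ 2 := by
  set a : E := ∑ k, mu k • v k with ha
  set b : E := ∑ k, lam k • v k with hb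
  have hwsum : ∑ j, ((1 - θ) * mu j + θ * lam j) = 1 := by
    rw [Finset.sum_add_distrib, ← Finset.mul_sum, ← Finset.mul_sum, hms, hls]; ring
  have hcc : ∑ k, ((1 - θ) * mu k + θ * lam k) • v k = (1 - θ) • a + θ • b := by
    rw [ha, hb, Finset.smul_sum, Finset.smul_sum, ← Finset.sum_add_distrib]
    refine Finset.sum_congr rfl fun k _ => ?_
    rw [add_smul, mul_smul, mul_smul]
  rw [hcc]
  have h1 : (∑ j, ((1 - θ) * mu j + θ * lam j) *
      ‖v j - ((1 - θ) • a + θ • b)‖ ^ 2) =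
      (∑ j, ((1 - θ) * mu j + θ * lam j) * ‖v j‖ ^ 2) - ‖(1 - θ) • a + θ • b‖ ^ 2 := by
    have := var_key v (fun j => (1 - θ) * mu j + θ * lam j) hwsum
    rw [hcc] at this; exact this
  have h2 := var_key v lam hls
  have h3 := var_key v mu hms
  rw [h1, h2, h3]
  have hsplit : (∑ j, ((1 - θ) * mu j + θ * lam j) * ‖v j‖ ^ 2) =
      (1 - θ) * (∑ j, mu j * ‖v j‖ ^ 2) + θ * (∑ j, lam j * ‖v j‖ ^ 2) := by
    rw [Finset.mul_sum, Finset.mul_sum, ← Finset.sum_add_distrib]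
    exact Finset.sum_congr rfl fun j _ => by ring
  rw [hsplit]
  have hnorm : ‖(1 - θ) • a + θ • b‖ ^ 2 =
      (1 - θ) * ‖a‖ ^ 2 + θ * ‖b‖ ^ 2 - θ * (1 - θ) * ‖a - b‖ ^ 2 := by
    have e1 : ‖(1 - θ) • a + θ • b‖ ^ 2 = inner ℝ ((1 - θ) • a + θ • b) ((1 - θ) • a + θ • b) := (real_inner_self_eq_norm_sq _).symm
    have e2 : ‖a - b‖ ^ 2 = inner ℝ (a - b) (a - b) := (real_inner_self_eq_norm_sq _).symm
    have e3 : ‖a‖ ^ 2 = inner ℝ a a := (real_inner_self_eq_norm_sq a).symm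
    have e4 : ‖b‖ ^ 2 = inner ℝ b b := (real_inner_self_eq_norm_sq b).symm
    rw [e1, e2, e3, e4]
    simp only [inner_add_add_self, inner_sub_sub_self, inner_smul_left, inner_smul_right,
      real_inner_comm a b, starRingEnd_apply, star_trivial]
    push_cast
    ring
  rw [hnorm]
  ring
end

section
/- Let ξ ∈ ℝⁿ be sub-Gaussian with variance proxy σ², let f_1,…,f_M, g ∈ ℝⁿ, let π, λ̃ be probability vectors in ℝ^M, ρ : [0,1] → ℝ with ρ(t) ≥ t for all t, and β > 0. Define R̃ = 2⟨ξ, f_{λ̃} − g⟩_n − (β/n) Σ_j λ̃_j log(ρ(λ̃_j)/π_j) where f_{λ̃} = Σ_j λ̃_j f_j and ⟨·,·⟩_n is the normalized inner product. Then E[exp((n/β) R̃ − (2σ²n/β²) Σ_j λ̃_j ‖f_j − g‖²_n)] ≤ 1, provided λ̃ is non-random (or the bound holds conditionally pointwise in λ̃). -/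
open MeasureTheory

/-- MGF control of the empirical process term in the Q-aggregation analysis. -/
theorem stmt_6 {Ω : Type*} [MeasurableSpace Ω] (μ : Measure Ω) [IsProbabilityMeasure μ]
    (n M : ℕ) (hn : 0 < n) (ξ : Ω → Fin n → ℝ) (σ β : ℝ) (hσ : 0 < σ) (hβ : 0 < β)
    (hsub : ∀ t : Fin n → ℝ,
      ∫ ω, Real.exp (∑ i, t i * ξ ω i) ∂μ ≤ Real.exp (σ ^ 2 * (∑ i, (t i) ^ 2) / 2))
    (f : Fin M → Fin n → ℝ) (g : Fin n → ℝ)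
    (p lt : Fin M → ℝ) (hp : ∀ j, 0 < p j) (hps : ∑ j, p j = 1)
    (hlt : ∀ j, 0 ≤ lt j) (hlts : ∑ j, lt j = 1)
    (ρ : ℝ → ℝ) (hρ : ∀ t ∈ Set.Icc (0 : ℝ) 1, t ≤ ρ t) :
    ∫ ω, Real.exp (((n : ℝ) / β) *
        (2 * ((1 / (n : ℝ)) * ∑ i, ξ ω i * ((∑ j, lt j * f j i) - g i))
          - (β / n) * ∑ j, lt j * Real.log (ρ (lt j) / p j))
      - (2 * σ ^ 2 * n / β ^ 2) *
          ∑ j, lt j * ((1 / (n : ℝ)) * ∑ i, (f j i - g i) ^ 2)) ∂μ ≤ 1 := by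
  have hn' : (n : ℝ) ≠ 0 := Nat.cast_ne_zero.mpr hn.ne'
  have hβ' : β ≠ 0 := hβ.ne'
  set d : Fin n → ℝ := fun i => (∑ j, lt j * f j i) - g i with hd
  set t : Fin n → ℝ := fun i => (2 / β) * d i with ht
  set L : ℝ := ∑ j, lt j * Real.log (ρ (lt j) / p j) with hL
  set S : Fin M → ℝ := fun j => ∑ i, (f j i - g i) ^ 2 with hS
  set Y : ℝ := ∑ j, lt j * S j with hY
  set c : ℝ := -L - (2 * σ ^ 2 / β ^ 2) * Y with hc
  -- pointwise rewrite of the exponent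
  have key : ∀ ω, (((n : ℝ) / β) *
        (2 * ((1 / (n : ℝ)) * ∑ i, ξ ω i * ((∑ j, lt j * f j i) - g i))
          - (β / n) * ∑ j, lt j * Real.log (ρ (lt j) / p j))
      - (2 * σ ^ 2 * n / β ^ 2) *
          ∑ j, lt j * ((1 / (n : ℝ)) * ∑ i, (f j i - g i) ^ 2))
      = c + ∑ i, t i * ξ ω i := by
    intro ω
    have h1 : ∑ j, lt j * ((1 / (n : ℝ)) * S j) = (1 / (n : ℝ)) * Y := by
      rw [hY, Finset.mul_sum]; exact Finset.sum_congr rfl fun j _ => by ring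
    have h2 : ∑ i, t i * ξ ω i = (2 / β) * ∑ i, ξ ω i * d i := by
      rw [Finset.mul_sum]; exact Finset.sum_congr rfl fun i _ => by rw [ht]; ring
    rw [h1, h2, hc]
    field_simp
    ring
  refine (integral_congr_ae (Filter.Eventually.of_forall fun ω => congrArg Real.exp (key ω))).trans_le ?_
  have h3 : ∀ ω, Real.exp (c + ∑ i, t i * ξ ω i)
      = Real.exp c * Real.exp (∑ i, t i * ξ ω i) := fun ω => Real.exp_add _ _
  simp only [h3]
  rw [MeasureTheory.integral_const_mul]
  have h4 : Real.exp c * ∫ ω, Real.exp (∑ i, t i * ξ ω i) ∂μ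
      ≤ Real.exp c * Real.exp (σ ^ 2 * (∑ i, (t i) ^ 2) / 2) :=
    mul_le_mul_of_nonneg_left (hsub t) (Real.exp_pos c).le
  refine h4.trans ?_
  rw [← Real.exp_add, Real.exp_le_one_iff]
  -- remains: c + σ²∑t²/2 ≤ 0
  have hsum_t : ∑ i, (t i) ^ 2 = (4 / β ^ 2) * ∑ i, (d i) ^ 2 := by
    rw [Finset.mul_sum]; exact Finset.sum_congr rfl fun i _ => by rw [ht]; ring
  -- Jensen: ∑ d² ≤ Y
  have hdY : ∑ i, (d i) ^ 2 ≤ Y := by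
    have hdi : ∀ i, d i = ∑ j, lt j * (f j i - g i) := by
      intro i
      rw [hd]
      simp only [mul_sub]
      rw [Finset.sum_sub_distrib, ← Finset.sum_mul, hlts, one_mul]
    have hpt : ∀ i, (d i) ^ 2 ≤ ∑ j, lt j * (f j i - g i) ^ 2 := by
      intro i
      have hcs := Finset.sum_mul_sq_le_sq_mul_sq Finset.univ
        (fun j => Real.sqrt (lt j)) (fun j => Real.sqrt (lt j) * (f j i - g i))
      have e1 : ∀ j, Real.sqrt (lt j) * (Real.sqrt (lt j) * (f j i - g i))
          = lt j * (f j i - g i) := fun j => by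
        rw [← mul_assoc, Real.mul_self_sqrt (hlt j)]
      have e2 : ∀ j, Real.sqrt (lt j) ^ 2 = lt j := fun j => Real.sq_sqrt (hlt j)
      have e3 : ∀ j, (Real.sqrt (lt j) * (f j i - g i)) ^ 2
          = lt j * (f j i - g i) ^ 2 := fun j => by rw [mul_pow, e2]
      simp only [e1, e2, e3, hlts, one_mul] at hcs
      calc (d i) ^ 2 = (∑ j, lt j * (f j i - g i)) ^ 2 := by rw [hdi i]
        _ ≤ ∑ j, lt j * (f j i - g i) ^ 2 := hcs
    calc ∑ i, (d i) ^ 2 ≤ ∑ i, ∑ j, lt j * (f j i - g i) ^ 2 :=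
          Finset.sum_le_sum fun i _ => hpt i
      _ = ∑ j, lt j * S j := by
          rw [Finset.sum_comm]
          exact Finset.sum_congr rfl fun j _ => by rw [hS, Finset.mul_sum]
  -- KL nonnegativity: 0 ≤ L
  have hL0 : 0 ≤ L := by
    have hterm : ∀ j, lt j - p j ≤ lt j * Real.log (ρ (lt j) / p j) := by
      intro j
      rcases eq_or_lt_of_le (hlt j) with h0 | h0
      · rw [← h0]; simp [(hp j).le]
      · have hle1 : lt j ≤ 1 := by
          rw [← hlts]
          exact Finset.single_le_sum (fun k _ => hlt k) (Finset.mem_univ j)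
        have hρj : lt j ≤ ρ (lt j) := hρ (lt j) ⟨(hlt j), hle1⟩
        have hρpos : 0 < ρ (lt j) := lt_of_lt_of_le h0 hρj
        have hfrac : lt j / p j ≤ ρ (lt j) / p j := by gcongr; exact (hp j).le
        have hlog1 : Real.log (lt j / p j) ≤ Real.log (ρ (lt j) / p j) :=
          Real.log_le_log (div_pos h0 (hp j)) hfrac
        have hlog2 : Real.log (p j / lt j) ≤ p j / lt j - 1 :=
          Real.log_le_sub_one_of_pos (div_pos (hp j) h0)
        have hinv : Real.log (lt j / p j) = - Real.log (p j / lt j) := by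
          rw [← Real.log_inv]
          congr 1
          field_simp
        have : 1 - p j / lt j ≤ Real.log (lt j / p j) := by
          rw [hinv]; linarith
        have hmul : lt j * (1 - p j / lt j) ≤ lt j * Real.log (lt j / p j) :=
          mul_le_mul_of_nonneg_left this (hlt j)
        have heq : lt j * (1 - p j / lt j) = lt j - p j := by
          field_simp
        calc lt j - p j = lt j * (1 - p j / lt j) := heq.symm
          _ ≤ lt j * Real.log (lt j / p j) := hmul
          _ ≤ lt j * Real.log (ρ (lt j) / p j) :=
              mul_le_mul_of_nonneg_left hlog1 (hlt j)
    calc (0:ℝ) = ∑ j, (lt j - p j) := by rw [Finset.sum_sub_distrib, hlts, hps]; ring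
      _ ≤ L := Finset.sum_le_sum fun j _ => hterm j
  rw [hc, hsum_t]
  have hmul2 : (2 * σ ^ 2 / β ^ 2) * (∑ i, (d i) ^ 2) ≤ (2 * σ ^ 2 / β ^ 2) * Y :=
    mul_le_mul_of_nonneg_left hdY (by positivity)
  have hre : σ ^ 2 * (4 / β ^ 2 * ∑ i, (d i) ^ 2) / 2
      = 2 * σ ^ 2 / β ^ 2 * ∑ i, (d i) ^ 2 := by ring
  rw [hre]
  linarith
end

section
/- Let 𝔣₁, 𝔣₂ ∈ ℝⁿ with |𝔣₁|² ≤ n, |𝔣₂|² ≥ n + 2√n, and ⟨𝔣₁, 𝔣₂⟩ = 0 (n ≥ 1). Then for any λ₁ ∈ [0, 1/2], |λ₁𝔣₁ + (1−λ₁)𝔣₂|² − |𝔣₁|² ≥ √n/2 − 2λ₁ n. In particular if furthermore λ₁ ≤ 1/(8√n), then |λ₁𝔣₁ + (1−λ₁)𝔣₂|² − |𝔣₁|² ≥ √n/4. -/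
/-- Key deterministic estimate in the proof that exponential weights are
deviation suboptimal. -/
theorem stmt_10 (n : ℕ) (hn : 1 ≤ n) (f1 f2 : EuclideanSpace ℝ (Fin n))
    (h1 : ‖f1‖ ^ 2 ≤ (n : ℝ)) (h2 : (n : ℝ) + 2 * Real.sqrt n ≤ ‖f2‖ ^ 2)
    (horth : (inner ℝ f1 f2 : ℝ) = 0)
    (l1 : ℝ) (hl0 : 0 ≤ l1) (hl : l1 ≤ 1 / 2) :
    Real.sqrt n / 2 - 2 * l1 * n ≤ ‖l1 • f1 + (1 - l1) • f2‖ ^ 2 - ‖f1‖ ^ 2 ∧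
      (l1 ≤ 1 / (8 * Real.sqrt n) →
        Real.sqrt n / 4 ≤ ‖l1 • f1 + (1 - l1) • f2‖ ^ 2 - ‖f1‖ ^ 2) := by
  set s := Real.sqrt n with hs
  have hn1 : (1 : ℝ) ≤ (n : ℝ) := by exact_mod_cast hn
  have hs2 : s ^ 2 = (n : ℝ) := Real.sq_sqrt (by positivity)
  have hs1 : (1 : ℝ) ≤ s := by
    rw [hs, show (1:ℝ) = Real.sqrt 1 by simp]
    exact Real.sqrt_le_sqrt hn1
  have hexp : ‖l1 • f1 + (1 - l1) • f2‖ ^ 2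
      = l1 ^ 2 * ‖f1‖ ^ 2 + (1 - l1) ^ 2 * ‖f2‖ ^ 2 := by
    rw [norm_add_sq_real, norm_smul, norm_smul, real_inner_smul_left,
      real_inner_smul_right, horth, Real.norm_eq_abs, Real.norm_eq_abs,
      abs_of_nonneg hl0, abs_of_nonneg (by linarith : (0:ℝ) ≤ 1 - l1)]
    ring
  have hmain : Real.sqrt n / 2 - 2 * l1 * n
      ≤ ‖l1 • f1 + (1 - l1) • f2‖ ^ 2 - ‖f1‖ ^ 2 := by
    rw [hexp]
    nlinarith [sq_nonneg (1 - l1), sq_nonneg l1, sq_nonneg (‖f1‖),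
      mul_nonneg (mul_nonneg hl0 hl0) (le_trans zero_le_one hn1),
      mul_le_mul_of_nonneg_left h2 (sq_nonneg (1 - l1)),
      mul_le_mul_of_nonneg_left h1 (by nlinarith : (0:ℝ) ≤ 1 - l1 ^ 2)]
  refine ⟨hmain, fun hl8 => ?_⟩
  have hspos : 0 < s := by linarith
  have : 2 * l1 * (n : ℝ) ≤ s / 4 := by
    have h8 : l1 * (8 * s) ≤ 1 := by
      calc l1 * (8 * s) ≤ (1 / (8 * s)) * (8 * s) :=
            mul_le_mul_of_nonneg_right hl8 (by positivity)
        _ = 1 := by field_simp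
    nlinarith
  linarith
end
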